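/- For the tilted CHSH operator W_α = α A₀⊗𝟙 + A₀⊗(B₀+B₁) + A₁⊗(B₀−B₁) with qubit observables A_r = cos a · X + (−1)^r sin a · Z and B_r = cos b · X + (−1)^r sin b · Z, the maximal eigenvalue over all a, b ∈ [0, π/2] and all two-qubit states equals √(8 + 2α²) for α ∈ [0, 2), achieved at a = π/4 and b = arcsin(√((4−α²)/8)). -/

import Mathlib

open Matrix ComplexOrder Kronecker Real

/-- Pauli X. -/
def σx : Matrix (Fin 2) (Fin 2) ℂ := !![0, 1; 1, 0]
/-- Pauli Y. -/
def σy : Matrix (Fin 2) (Fin 2) ℂ := !![0, -Complex.I; Complex.I, 0]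
/-- Pauli Z. -/
def σz : Matrix (Fin 2) (Fin 2) ℂ := !![1, 0; 0, -1]

/-- The tilted CHSH operator `W_α(a,b)` with qubit observables
`A_r = cos a·X + (−1)^r sin a·Z`, `B_r = cos b·X + (−1)^r sin b·Z`. -/
noncomputable def Wop (α a b : ℝ) : Matrix (Fin 2 × Fin 2) (Fin 2 × Fin 2) ℂ :=
  let A0 := ((Real.cos a : ℝ) : ℂ) • σx + ((Real.sin a : ℝ) : ℂ) • σz
  let A1 := ((Real.cos a : ℝ) : ℂ) • σx - ((Real.sin a : ℝ) : ℂ) • σz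
  let B0 := ((Real.cos b : ℝ) : ℂ) • σx + ((Real.sin b : ℝ) : ℂ) • σz
  let B1 := ((Real.cos b : ℝ) : ℂ) • σx - ((Real.sin b : ℝ) : ℂ) • σz
  ((α : ℝ) : ℂ) • (A0 ⊗ₖ (1 : Matrix (Fin 2) (Fin 2) ℂ)) + A0 ⊗ₖ (B0 + B1) + A1 ⊗ₖ (B0 - B1)

def e4 : Fin 4 ≃ Fin 2 × Fin 2 where
  toFun := ![(0,0),(0,1),(1,0),(1,1)]
  invFun p := ![![0,1],![2,3]] p.1 p.2
  left_inv := by decide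
  right_inv := by decide

noncomputable def Mreal (α a b x : ℝ) : Matrix (Fin 4) (Fin 4) ℝ :=
  !![x - (α*Real.sin a - 2*Real.sin a*Real.sin b), -(2*Real.sin a*Real.cos b), -(α*Real.cos a + 2*Real.cos a*Real.sin b), -(2*Real.cos a*Real.cos b);
     -(2*Real.sin a*Real.cos b), x - (α*Real.sin a + 2*Real.sin a*Real.sin b), -(2*Real.cos a*Real.cos b), -(α*Real.cos a - 2*Real.cos a*Real.sin b);
     -(α*Real.cos a + 2*Real.cos a*Real.sin b), -(2*Real.cos a*Real.cos b), x - (-(α*Real.sin a) + 2*Real.sin a*Real.sin b), 2*Real.sin a*Real.cos b;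
     -(2*Real.cos a*Real.cos b), -(α*Real.cos a - 2*Real.cos a*Real.sin b), 2*Real.sin a*Real.cos b, x - (-(α*Real.sin a) - 2*Real.sin a*Real.sin b)]

lemma submatrix_eq (α a b x : ℝ) :
    ((x:ℂ) • (1 : Matrix (Fin 2 × Fin 2) (Fin 2 × Fin 2) ℂ) - Wop α a b).submatrix e4 e4 =
    (Mreal α a b x).map Complex.ofReal := by
  ext i j
  fin_cases i <;> fin_cases j <;>
    simp [Wop, σx, σz, Mreal, e4, Matrix.smul_apply, Matrix.sub_apply, Matrix.add_apply,
      Prod.ext_iff, Matrix.one_apply,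
      show (0 : Fin 2 × Fin 2).1 = 0 from rfl, show (0 : Fin 2 × Fin 2).2 = 0 from rfl,
      show (1 : Fin 2 × Fin 2).1 = 1 from rfl, show (1 : Fin 2 × Fin 2).2 = 1 from rfl] <;>
    push_cast <;> ring_nf

lemma detMreal (α a b x : ℝ) :
    (Mreal α a b x).det =
      x^4 - (8 + 2*α^2)*x^2 +
        ((4 - α^2)^2 - 64*(Real.sin a)^2*(Real.cos a)^2*(Real.sin b)^2*(4*(Real.cos b)^2 - α^2)) := by
  have h1 : Real.sin a ^ 2 + Real.cos a ^ 2 = 1 := Real.sin_sq_add_cos_sq a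
  have h2 : Real.sin b ^ 2 + Real.cos b ^ 2 = 1 := Real.sin_sq_add_cos_sq b
  simp [Mreal, Matrix.det_succ_row_zero, Fin.sum_univ_succ, Fin.succAbove,
    show (Fin.castSucc 2 : Fin 4) = 2 from rfl, show (Fin.castSucc 1 : Fin 4) = 1 from rfl,
    show (Fin.castSucc 0 : Fin 4) = 0 from rfl, Matrix.cons_val_two, Matrix.cons_val_three,
    Matrix.tail_cons]
  linear_combination
    (-2*α^2*x^2 + α^4 - 8*(Real.sin b)^2*x^2 - 8*(Real.sin b)^2*α^2 + 16*(Real.sin b)^4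
      - 8*(Real.cos b)^2*x^2 - 8*(Real.cos b)^2*α^2 + 32*(Real.cos b)^2*(Real.sin b)^2
      + 16*(Real.cos b)^4 + (Real.sin a)^2*α^4 - 8*(Real.sin a)^2*(Real.sin b)^2*α^2
      + 16*(Real.sin a)^2*(Real.sin b)^4 - 8*(Real.sin a)^2*(Real.cos b)^2*α^2
      + 32*(Real.sin a)^2*(Real.cos b)^2*(Real.sin b)^2 + 16*(Real.sin a)^2*(Real.cos b)^4
      + (Real.cos a)^2*α^4 - 8*(Real.cos a)^2*(Real.sin b)^2*α^2
      + 16*(Real.cos a)^2*(Real.sin b)^4 - 8*(Real.cos a)^2*(Real.cos b)^2*α^2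
      + 32*(Real.cos a)^2*(Real.cos b)^2*(Real.sin b)^2 + 16*(Real.cos a)^2*(Real.cos b)^4) * h1
    + (16 - 8*x^2 - 8*α^2 + 16*(Real.sin b)^2 + 16*(Real.cos b)^2) * h2

lemma det_W (α a b x : ℝ) :
    ((x:ℂ) • (1 : Matrix (Fin 2 × Fin 2) (Fin 2 × Fin 2) ℂ) - Wop α a b).det =
      ((x^4 - (8 + 2*α^2)*x^2 +
        ((4 - α^2)^2 - 64*(Real.sin a)^2*(Real.cos a)^2*(Real.sin b)^2*(4*(Real.cos b)^2 - α^2)) : ℝ) : ℂ) := by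
  rw [← Matrix.det_submatrix_equiv_self e4, submatrix_eq]
  rw [show (Mreal α a b x).map Complex.ofReal
        = Complex.ofRealHom.mapMatrix (Mreal α a b x) from rfl]
  rw [← RingHom.map_det]
  rw [detMreal]
  rfl

lemma Cnonneg (S T A : ℝ) (hS0 : 0 ≤ S) (hS1 : S ≤ 1) (hT0 : 0 ≤ T) (hT1 : T ≤ 1) :
    0 ≤ (4 - A)^2 - 64 * S * (1-S) * T * ((4 - 4*T) - A) := by
  rcases le_or_gt ((4 - 4*T) - A) 0 with h | h
  · nlinarith [mul_nonneg (mul_nonneg (mul_nonneg (by norm_num : (0:ℝ) ≤ 64) hS0)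
      (by linarith : 0 ≤ 1 - S)) hT0, sq_nonneg (4 - A)]
  · nlinarith [sq_nonneg (4*T - ((4 - 4*T) - A)), mul_nonneg (mul_nonneg hT0 h.le) (sq_nonneg (2*S - 1))]

theorem tilted_chsh_quantum_value (α : ℝ) (hα : α ∈ Set.Ico (0 : ℝ) 2) :
    (∀ a ∈ Set.Icc (0 : ℝ) (π/2), ∀ b ∈ Set.Icc (0 : ℝ) (π/2),
      ∀ r : ℝ, (r : ℂ) ∈ spectrum ℂ (Wop α a b) → r ≤ Real.sqrt (8 + 2 * α ^ 2)) ∧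
    ((Real.sqrt (8 + 2 * α ^ 2) : ℝ) : ℂ) ∈
      spectrum ℂ (Wop α (π/4) (Real.arcsin (Real.sqrt ((4 - α ^ 2) / 8)))) := by
  obtain ⟨hα0, hα2⟩ := hα
  constructor
  · intro a _ b _ r hr
    rw [spectrum.mem_iff, Algebra.algebraMap_eq_smul_one] at hr
    have hdet : ((r:ℂ) • (1 : Matrix (Fin 2 × Fin 2) (Fin 2 × Fin 2) ℂ) - Wop α a b).det = 0 := by
      by_contra hne
      exact hr ((Matrix.isUnit_iff_isUnit_det _).mpr (isUnit_iff_ne_zero.mpr hne))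
    rw [det_W, Complex.ofReal_eq_zero] at hdet
    -- real polynomial identity
    have h1 : Real.sin a ^ 2 + Real.cos a ^ 2 = 1 := Real.sin_sq_add_cos_sq a
    have h2 : Real.sin b ^ 2 + Real.cos b ^ 2 = 1 := Real.sin_sq_add_cos_sq b
    have hC : 0 ≤ (4 - α^2)^2
        - 64*(Real.sin a)^2*(Real.cos a)^2*(Real.sin b)^2*(4*(Real.cos b)^2 - α^2) := by
      have key := Cnonneg (Real.sin a ^ 2) (Real.sin b ^ 2) (α^2)
        (sq_nonneg _) (by nlinarith [sq_nonneg (Real.cos a)]) (sq_nonneg _)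
        (by nlinarith [sq_nonneg (Real.cos b)])
      have hca : Real.cos a ^ 2 = 1 - Real.sin a ^ 2 := by linarith
      have hcb : Real.cos b ^ 2 = 1 - Real.sin b ^ 2 := by linarith
      rw [hca, hcb]
      nlinarith [key]
    have hr2 : r^2 ≤ 8 + 2*α^2 := by
      nlinarith [hdet, hC, sq_nonneg r, sq_nonneg (r^2 - (8 + 2*α^2))]
    calc r ≤ |r| := le_abs_self r
      _ = Real.sqrt (r^2) := (Real.sqrt_sq_eq_abs r).symm
      _ ≤ Real.sqrt (8 + 2*α^2) := Real.sqrt_le_sqrt hr2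
  · set s : ℝ := Real.sqrt ((4 - α ^ 2) / 8) with hs
    set b : ℝ := Real.arcsin s with hb
    set x : ℝ := Real.sqrt (8 + 2 * α ^ 2) with hx
    have hden : (0:ℝ) ≤ (4 - α ^ 2) / 8 := by nlinarith
    have hs2 : s^2 = (4 - α^2)/8 := Real.sq_sqrt hden
    have hs1 : s ≤ 1 := by
      rw [show (1:ℝ) = Real.sqrt 1 from (Real.sqrt_one).symm]
      exact Real.sqrt_le_sqrt (by nlinarith)
    have hsb : Real.sin b = s := Real.sin_arcsin
      (by linarith [Real.sqrt_nonneg ((4 - α ^ 2) / 8)]) hs1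
    have hcb2 : Real.cos b ^ 2 = 1 - (4 - α^2)/8 := by
      have := Real.sin_sq_add_cos_sq b
      rw [hsb] at this; linarith [hs2]
    have hsa : Real.sin (π/4) ^ 2 = 1/2 := by
      rw [Real.sin_pi_div_four, div_pow, Real.sq_sqrt (by norm_num : (0:ℝ) ≤ 2)]; norm_num
    have hca : Real.cos (π/4) ^ 2 = 1/2 := by
      rw [Real.cos_pi_div_four, div_pow, Real.sq_sqrt (by norm_num : (0:ℝ) ≤ 2)]; norm_num
    have hx2 : x^2 = 8 + 2*α^2 := Real.sq_sqrt (by positivity)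
    have hsb2 : Real.sin b ^ 2 = (4 - α^2)/8 := by rw [hsb]; exact hs2
    rw [spectrum.mem_iff, Algebra.algebraMap_eq_smul_one]
    intro hU
    have hdet := (Matrix.isUnit_iff_isUnit_det _).mp hU
    rw [det_W] at hdet
    rw [isUnit_iff_ne_zero] at hdet
    apply hdet
    rw [Complex.ofReal_eq_zero]
    linear_combination x^2 * hx2
      + (-64 * Real.cos (π/4)^2 * Real.sin b^2 * (4*Real.cos b^2 - α^2)) * hsa
      + (-32 * Real.sin b^2 * (4*Real.cos b^2 - α^2)) * hca
      + (-16 * (4*Real.cos b^2 - α^2)) * hsb2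
      + (-64 * ((4 - α^2)/8)) * hcb2
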